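/- Let k be a field of characteristic zero and C an affine k-domain. Then C is rigid (has no nonzero locally nilpotent k-derivation) if and only if ML*(C[T]) = C, where C[T] = C^[1]. -/

import Mathlib

/-- A derivation is *locally nilpotent* if every element is killed by some iterate. -/
def IsLND {k B : Type*} [CommRing k] [CommRing B] [Algebra k B]
    (D : Derivation k B B) : Prop :=
  ∀ b : B, ∃ n : ℕ, (D.toLinearMap ^ n) b = 0

/-- A derivation *has a slice* if `1` is in its image. -/
def HasSlice {k B : Type*} [CommRing k] [CommRing B] [Algebra k B]
    (D : Derivation k B B) : Prop :=
  ∃ s : B, D s = 1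

/-- The kernel of a derivation, as a subalgebra. -/
def lndKer {k B : Type*} [CommRing k] [CommRing B] [Algebra k B]
    (D : Derivation k B B) : Subalgebra k B where
  carrier := {b | D b = 0}
  mul_mem' := by
    intro a b ha hb
    simp only [Set.mem_setOf_eq] at *
    simp [D.leibniz, ha, hb]
  add_mem' := by
    intro a b ha hb
    simp only [Set.mem_setOf_eq] at *
    simp [ha, hb]
  algebraMap_mem' := fun r => D.map_algebraMap r

/-- The Makar-Limanov invariant: intersection of the kernels of all locally
nilpotent derivations. -/
def ML (k : Type*) {B : Type*} [CommRing k] [CommRing B] [Algebra k B] : Subalgebra k B :=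
  ⨅ D ∈ {D : Derivation k B B | IsLND D}, lndKer D

/-- The Makar-Limanov–Freudenburg invariant: intersection of the kernels of all locally
nilpotent derivations admitting a slice (equal to `⊤ = B` if none exist). -/
def MLstar (k : Type*) {B : Type*} [CommRing k] [CommRing B] [Algebra k B] : Subalgebra k B :=
  ⨅ D ∈ {D : Derivation k B B | IsLND D ∧ HasSlice D}, lndKer D

/-- A `k`-algebra is *rigid* if it admits no nonzero locally nilpotent derivation. -/
def IsRigid (k B : Type*) [CommRing k] [CommRing B] [Algebra k B] : Prop :=
  ∀ D : Derivation k B B, IsLND D → D = 0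

/-- The extension `A ⊆ B` has transcendence degree `n`. -/
def TrdegEq (A B : Type*) [CommRing A] [CommRing B] [Algebra A B] (n : ℕ) : Prop :=
  (∃ x : Fin n → B, AlgebraicIndependent A x) ∧
    ∀ x : Fin (n + 1) → B, ¬ AlgebraicIndependent A x

/-- A subring `A` of a domain `B` is *inert* if `f * g ∈ A` for nonzero `f, g`
implies `f ∈ A` and `g ∈ A`. -/
def IsInert {B : Type*} [CommRing B] (A : Subring B) : Prop :=
  ∀ f g : B, f ≠ 0 → g ≠ 0 → f * g ∈ A → f ∈ A ∧ g ∈ A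

noncomputable section CML10Aux

open Polynomial Finset

namespace CML10

section General

variable {k B : Type*} [CommRing k] [CommRing B] [Algebra k B]

lemma iter_succ_apply (D : Derivation k B B) (n : ℕ) (x : B) :
    (D.toLinearMap ^ (n + 1)) x = D ((D.toLinearMap ^ n) x) := by
  rw [pow_succ', Module.End.mul_apply]; rfl

lemma iter_succ_apply' (D : Derivation k B B) (n : ℕ) (x : B) :
    (D.toLinearMap ^ (n + 1)) x = (D.toLinearMap ^ n) (D x) := by
  rw [pow_succ, Module.End.mul_apply]; rfl

lemma iter_zero_of_le (D : Derivation k B B) {n m : ℕ} (h : n ≤ m) {x : B}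
    (hx : (D.toLinearMap ^ n) x = 0) : (D.toLinearMap ^ m) x = 0 := by
  obtain ⟨r, rfl⟩ := Nat.exists_eq_add_of_le h
  rw [add_comm, pow_add, Module.End.mul_apply, hx, map_zero]

lemma iter_leibniz (D : Derivation k B B) (n : ℕ) (x y : B) :
    (D.toLinearMap ^ n) (x * y) =
      ∑ i ∈ Finset.range (n + 1),
        (n.choose i : B) * ((D.toLinearMap ^ i) x * (D.toLinearMap ^ (n - i)) y) := by
  induction n with
  | zero => simp
  | succ n ih =>
    rw [iter_succ_apply, ih, map_sum]
    have hterm : ∀ i ∈ Finset.range (n + 1),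
        D ((n.choose i : B) * ((D.toLinearMap ^ i) x * (D.toLinearMap ^ (n - i)) y)) =
          (n.choose i : B) * ((D.toLinearMap ^ (i+1)) x * (D.toLinearMap ^ (n - i)) y) +
          (n.choose i : B) * ((D.toLinearMap ^ i) x * (D.toLinearMap ^ (n - i + 1)) y) := by
      intro i _
      rw [Derivation.leibniz, Derivation.map_natCast, Derivation.leibniz,
        iter_succ_apply, iter_succ_apply]
      simp only [smul_eq_mul]
      ring
    rw [Finset.sum_congr rfl hterm, Finset.sum_add_distrib]
    have h2 : ∀ i ∈ Finset.range (n + 1),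
        (n.choose i : B) * ((D.toLinearMap ^ i) x * (D.toLinearMap ^ (n - i + 1)) y) =
        (n.choose i : B) * ((D.toLinearMap ^ i) x * (D.toLinearMap ^ (n + 1 - i)) y) := by
      intro i hi
      rw [Finset.mem_range] at hi
      have h3 : n - i + 1 = n + 1 - i := by omega
      rw [h3]
    rw [Finset.sum_congr rfl h2]
    have hrhs : ∑ i ∈ Finset.range (n + 2),
        ((n+1).choose i : B) * ((D.toLinearMap ^ i) x * (D.toLinearMap ^ (n + 1 - i)) y) =
        (∑ i ∈ Finset.range (n + 1),
          (n.choose i : B) * ((D.toLinearMap ^ (i+1)) x * (D.toLinearMap ^ (n - i)) y)) +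
        (∑ i ∈ Finset.range (n + 1),
          (n.choose (i+1) : B) * ((D.toLinearMap ^ (i+1)) x * (D.toLinearMap ^ (n - i)) y)) +
        ((D.toLinearMap ^ 0) x * (D.toLinearMap ^ (n + 1)) y) := by
      rw [Finset.sum_range_succ' (fun i => ((n+1).choose i : B) *
        ((D.toLinearMap ^ i) x * (D.toLinearMap ^ (n + 1 - i)) y)) (n+1)]
      simp only [Nat.choose_succ_succ, Nat.cast_add, Nat.choose_zero_right, Nat.cast_one, one_mul]
      rw [← Finset.sum_add_distrib]
      congr 1
      · refine Finset.sum_congr rfl fun i hi => ?_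
        rw [Finset.mem_range] at hi
        have h4 : n + 1 - (i + 1) = n - i := by omega
        rw [h4]
        ring
    rw [hrhs]
    have hlhs2 : ∑ i ∈ Finset.range (n + 1),
        (n.choose i : B) * ((D.toLinearMap ^ i) x * (D.toLinearMap ^ (n + 1 - i)) y) =
        (∑ i ∈ Finset.range (n + 1),
          (n.choose (i+1) : B) * ((D.toLinearMap ^ (i+1)) x * (D.toLinearMap ^ (n - i)) y)) +
        ((D.toLinearMap ^ 0) x * (D.toLinearMap ^ (n + 1)) y) := by
      rw [Finset.sum_range_succ' (fun i => (n.choose i : B) *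
        ((D.toLinearMap ^ i) x * (D.toLinearMap ^ (n + 1 - i)) y)) n]
      rw [Finset.sum_range_succ (fun i => (n.choose (i+1) : B) *
        ((D.toLinearMap ^ (i+1)) x * (D.toLinearMap ^ (n - i)) y)) n]
      simp only [Nat.choose_succ_self, Nat.cast_zero, zero_mul, add_zero,
        Nat.choose_zero_right, Nat.cast_one, one_mul]
      congr 1
      refine Finset.sum_congr rfl fun i hi => ?_
      rw [Finset.mem_range] at hi
      have h4 : n + 1 - (i + 1) = n - i := by omega
      rw [h4]
    rw [hlhs2]
    ring

lemma exists_nu (D : Derivation k B B) (hD : IsLND D) {x : B} (hx : x ≠ 0) :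
    ∃ n, (D.toLinearMap ^ n) x ≠ 0 ∧ (D.toLinearMap ^ (n + 1)) x = 0 := by
  classical
  obtain ⟨N, hN⟩ := hD x
  have hPex : ∃ m, (D.toLinearMap ^ (m + 1)) x = 0 :=
    ⟨N, iter_zero_of_le D (Nat.le_succ N) hN⟩
  refine ⟨Nat.find hPex, ?_, Nat.find_spec hPex⟩
  rcases Nat.eq_zero_or_pos (Nat.find hPex) with h0 | hpos
  · rw [h0]; simpa using hx
  · obtain ⟨m, hm⟩ := Nat.exists_eq_add_of_lt hpos
    have := Nat.find_min hPex (m := Nat.find hPex - 1) (by omega)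
    have he : Nat.find hPex - 1 + 1 = Nat.find hPex := by omega
    rwa [he] at this

lemma nu_eq (D : Derivation k B B) {x : B} {a b : ℕ}
    (ha : (D.toLinearMap ^ a) x ≠ 0) (ha' : (D.toLinearMap ^ (a + 1)) x = 0)
    (hb : (D.toLinearMap ^ b) x ≠ 0) (hb' : (D.toLinearMap ^ (b + 1)) x = 0) :
    a = b := by
  rcases lt_trichotomy a b with h | h | h
  · exact absurd (iter_zero_of_le D (by omega) ha') hb
  · exact h
  · exact absurd (iter_zero_of_le D (by omega) hb') ha

lemma nu_mul [IsDomain B] [CharZero B] (D : Derivation k B B) {x y : B} {a b : ℕ}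
    (ha : (D.toLinearMap ^ a) x ≠ 0) (ha' : (D.toLinearMap ^ (a + 1)) x = 0)
    (hb : (D.toLinearMap ^ b) y ≠ 0) (hb' : (D.toLinearMap ^ (b + 1)) y = 0) :
    (D.toLinearMap ^ (a + b)) (x * y) ≠ 0 ∧
      (D.toLinearMap ^ (a + b + 1)) (x * y) = 0 := by
  constructor
  · rw [iter_leibniz]
    rw [Finset.sum_eq_single a]
    · have hab : a + b - a = b := by omega
      rw [hab]
      exact mul_ne_zero (Nat.cast_ne_zero.mpr (Nat.choose_pos (by omega)).ne')
        (mul_ne_zero ha hb)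
    · intro i _ hne
      rcases lt_or_gt_of_ne hne with h | h
      · have : (D.toLinearMap ^ (a + b - i)) y = 0 :=
          iter_zero_of_le D (by omega) hb'
        rw [this, mul_zero, mul_zero]
      · have : (D.toLinearMap ^ i) x = 0 := iter_zero_of_le D (by omega) ha'
        rw [this, zero_mul, mul_zero]
    · intro h
      exact absurd (Finset.mem_range.mpr (by omega)) h
  · rw [iter_leibniz]
    refine Finset.sum_eq_zero fun i _ => ?_
    rcases le_or_gt i a with h | h
    · have : (D.toLinearMap ^ (a + b + 1 - i)) y = 0 :=
        iter_zero_of_le D (by omega) hb'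
      rw [this, mul_zero, mul_zero]
    · have : (D.toLinearMap ^ i) x = 0 := iter_zero_of_le D (by omega) ha'
      rw [this, zero_mul, mul_zero]

lemma nu_pow [IsDomain B] [CharZero B] [Nontrivial B] (D : Derivation k B B) {x : B} {a : ℕ}
    (ha : (D.toLinearMap ^ a) x ≠ 0) (ha' : (D.toLinearMap ^ (a + 1)) x = 0) (m : ℕ) :
    (D.toLinearMap ^ (m * a)) (x ^ m) ≠ 0 ∧
      (D.toLinearMap ^ (m * a + 1)) (x ^ m) = 0 := by
  induction m with
  | zero =>
    constructor
    · simpa using one_ne_zero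
    · simp
  | succ m ih =>
    have hsm : (m + 1) * a = m * a + a := by ring
    have h := nu_mul D ih.1 ih.2 ha ha'
    rw [hsm]
    constructor
    · rw [pow_succ x m]; exact h.1
    · rw [pow_succ x m]; exact h.2

end General

section NoTop

variable {k R : Type*} [CommRing k] [CommRing R] [IsDomain R] [CharZero R]
  [Algebra k (Polynomial R)]

/-- An LND of `R[X]` cannot send `X` to `u·X^(d+1)` with `u ≠ 0`. -/
lemma no_top (D : Derivation k (Polynomial R) (Polynomial R)) (hD : IsLND D)
    {u : R} (hu : u ≠ 0) (d : ℕ) (hX : D X = Polynomial.C u * X ^ (d + 1)) : False := by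
  have hXne : (X : Polynomial R) ≠ 0 := X_ne_zero
  have hCune : (Polynomial.C u : Polynomial R) ≠ 0 := fun h => hu (by simpa using h)
  obtain ⟨a, ha, ha'⟩ := exists_nu D hD hXne
  obtain ⟨b, hb, hb'⟩ := exists_nu D hD hCune
  have hDXne : D X ≠ 0 := by
    rw [hX]; exact mul_ne_zero hCune (pow_ne_zero _ hXne)
  have hane : a ≠ 0 := by
    intro h0
    rw [h0, zero_add, pow_one] at ha'
    exact hDXne ha'
  -- ν(D X) = a - 1
  have hfw : ∀ m : ℕ, (D.toLinearMap ^ m) (D X) = (D.toLinearMap ^ (m + 1)) X := by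
    intro m
    rw [iter_succ_apply']
  have h1 : (D.toLinearMap ^ (a - 1)) (D X) ≠ 0 := by
    rw [hfw]
    have : a - 1 + 1 = a := by omega
    rw [this]; exact ha
  have h1' : (D.toLinearMap ^ (a - 1 + 1)) (D X) = 0 := by
    rw [hfw]
    have : a - 1 + 1 + 1 = a + 1 := by omega
    rw [this]; exact ha'
  -- ν(C u * X^(d+1)) = b + (d+1) * a
  have hpow := nu_pow D ha ha' (d + 1)
  have hmul := nu_mul D hb hb' hpow.1 hpow.2
  rw [← hX] at hmul
  have heq := nu_eq D h1 h1' hmul.1 hmul.2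
  have hge : (d + 1) * a ≥ a := Nat.le_mul_of_pos_left a (by omega)
  omega

end NoTop


section CW

variable {k R : Type*} [CommRing k] [CommRing R] [Algebra k R]

/-- Coefficientwise application of a derivation, as a function. -/
def cwFun (δ : R → R) (p : Polynomial R) : Polynomial R :=
  p.sum fun n a => monomial n (δ a)

lemma cwFun_coeff (δ : R → R) (hδ : δ 0 = 0) (p : Polynomial R) (i : ℕ) :
    (cwFun δ p).coeff i = δ (p.coeff i) := by
  classical
  rw [cwFun, Polynomial.sum_def, finset_sum_coeff]
  simp only [coeff_monomial]
  rw [Finset.sum_ite_eq' p.support i (fun n => δ (p.coeff n))]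
  split_ifs with h
  · rfl
  · rw [Polynomial.notMem_support_iff.mp h, hδ]

/-- Coefficientwise application of a derivation, as a derivation on `R[X]`. -/
def cwDer (δ : Derivation k R R) : Derivation k (Polynomial R) (Polynomial R) where
  toFun := cwFun δ
  map_add' p q := by
    ext i
    simp [cwFun_coeff δ (map_zero δ), coeff_add]
  map_smul' r p := by
    ext i
    simp [cwFun_coeff δ (map_zero δ), Polynomial.coeff_smul]
  map_one_eq_zero' := by
    ext i
    rw [LinearMap.coe_mk, AddHom.coe_mk, cwFun_coeff δ (map_zero δ), coeff_one]
    split_ifs with h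
    · simp
    · simp
  leibniz' p q := by
    ext i
    rw [LinearMap.coe_mk, AddHom.coe_mk, cwFun_coeff δ (map_zero δ), coeff_mul]
    rw [map_sum]
    have hterm : ∀ x ∈ Finset.HasAntidiagonal.antidiagonal i,
        δ (p.coeff x.1 * q.coeff x.2) =
          p.coeff x.1 * δ (q.coeff x.2) + q.coeff x.2 * δ (p.coeff x.1) := by
      intro x _
      rw [Derivation.leibniz, smul_eq_mul, smul_eq_mul]
    rw [Finset.sum_congr rfl hterm, Finset.sum_add_distrib]
    have h1 : ∑ x ∈ Finset.HasAntidiagonal.antidiagonal i, p.coeff x.1 * δ (q.coeff x.2) =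
        (p • cwFun δ q).coeff i := by
      rw [smul_eq_mul, coeff_mul]
      refine Finset.sum_congr rfl fun x _ => ?_
      rw [cwFun_coeff δ (map_zero δ)]
    have h2 : ∑ x ∈ Finset.HasAntidiagonal.antidiagonal i, q.coeff x.2 * δ (p.coeff x.1) =
        (q • cwFun δ p).coeff i := by
      rw [smul_eq_mul, coeff_mul]
      rw [← Finset.Nat.sum_antidiagonal_swap]
      refine Finset.sum_congr rfl fun x _ => ?_
      rw [cwFun_coeff δ (map_zero δ)]
      simp [mul_comm]
    rw [h1, h2, coeff_add]

lemma cwDer_coeff (δ : Derivation k R R) (p : Polynomial R) (i : ℕ) :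
    (cwDer δ p).coeff i = δ (p.coeff i) :=
  cwFun_coeff δ (map_zero δ) p i

lemma cwDer_monomial (δ : Derivation k R R) (n : ℕ) (a : R) :
    cwDer δ (monomial n a) = monomial n (δ a) := by
  ext i
  rw [cwDer_coeff, coeff_monomial, coeff_monomial, apply_ite δ, map_zero]

lemma cwDer_C (δ : Derivation k R R) (a : R) :
    cwDer δ (Polynomial.C a) = Polynomial.C (δ a) := by
  ext i
  rw [cwDer_coeff, coeff_C, coeff_C, apply_ite δ, map_zero]

lemma cwDer_X (δ : Derivation k R R) : cwDer δ (X : Polynomial R) = 0 := by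
  ext i
  rw [cwDer_coeff, coeff_X, coeff_zero, apply_ite δ, map_zero, Derivation.map_one_eq_zero δ]
  simp

end CW


section Coeffs

variable {k R : Type*} [CommRing k] [CommRing R] [Algebra k (Polynomial R)]

lemma D_monomial (D : Derivation k (Polynomial R) (Polynomial R)) (n : ℕ) (a : R) :
    D (monomial n a) = Polynomial.C a * (n • (X ^ (n-1) * D X)) + X ^ n * D (Polynomial.C a) := by
  rw [← C_mul_X_pow_eq_monomial, Derivation.leibniz, Derivation.leibniz_pow]
  simp only [smul_eq_mul]

lemma D_apply_sum (D : Derivation k (Polynomial R) (Polynomial R)) (q : Polynomial R) :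
    D q = ∑ n ∈ q.support, D (monomial n (q.coeff n)) := by
  conv_lhs => rw [← Polynomial.sum_monomial_eq q, Polynomial.sum_def, map_sum]

variable (D : Derivation k (Polynomial R) (Polynomial R)) (d e : ℕ)
  (hC : ∀ (a : R) (j : ℕ), d < j → (D (Polynomial.C a)).coeff j = 0)
  (hde : d ≤ e) (hXe : ∀ j, e + 1 < j → (D X).coeff j = 0)

include hC hde hXe

lemma coeff_D_monomial_top (n : ℕ) (a : R) :
    (D (monomial n a)).coeff (n + e) =
      n • (a * (D X).coeff (e + 1)) + (D (Polynomial.C a)).coeff e := by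
  rw [D_monomial, coeff_add, coeff_C_mul]
  cases n with
  | zero =>
    simp
  | succ m =>
    rw [Polynomial.X_pow_mul, Polynomial.X_pow_mul, coeff_smul,
      coeff_mul_X_pow', coeff_mul_X_pow']
    have h1 : m + 1 ≤ m + 1 + e := by omega
    have h2 : m + 1 - 1 ≤ m + 1 + e := by omega
    rw [if_pos h1, if_pos h2]
    have h3 : m + 1 + e - (m + 1 - 1) = e + 1 := by omega
    have h4 : m + 1 + e - (m + 1) = e := by omega
    rw [h3, h4, mul_smul_comm]

lemma coeff_D_monomial_zero (n : ℕ) (a : R) (i : ℕ) (h : n + e < i) :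
    (D (monomial n a)).coeff i = 0 := by
  rw [D_monomial, coeff_add, coeff_C_mul, Polynomial.X_pow_mul, Polynomial.X_pow_mul,
    coeff_smul, coeff_mul_X_pow', coeff_mul_X_pow']
  have hz2 : (if n ≤ i then (D (Polynomial.C a)).coeff (i - n) else 0) = 0 := by
    split_ifs with hle
    · exact hC _ _ (by omega)
    · rfl
  cases n with
  | zero =>
    rw [hz2, zero_smul, mul_zero, add_zero]
  | succ m =>
    have hz1 : (if m + 1 - 1 ≤ i then (D X).coeff (i - (m + 1 - 1)) else 0) = 0 := by
      split_ifs with hle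
      · exact hXe _ (by omega)
      · rfl
    rw [hz1, hz2, smul_zero, mul_zero, add_zero]

lemma coeff_D_apply_zero (q : Polynomial R) (t : ℕ) (hq : ∀ j, t < j → q.coeff j = 0)
    (i : ℕ) (h : t + e < i) : (D q).coeff i = 0 := by
  rw [D_apply_sum, finset_sum_coeff]
  refine Finset.sum_eq_zero fun n hn => ?_
  have hnt : n ≤ t := by
    by_contra hgt
    exact (Polynomial.mem_support_iff.mp hn) (hq n (by omega))
  exact coeff_D_monomial_zero D d e hC hde hXe n _ i (by omega)

lemma coeff_D_apply_top (q : Polynomial R) (t : ℕ) (hq : ∀ j, t < j → q.coeff j = 0) :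
    (D q).coeff (t + e) =
      t • (q.coeff t * (D X).coeff (e + 1)) + (D (Polynomial.C (q.coeff t))).coeff e := by
  classical
  rw [D_apply_sum, finset_sum_coeff]
  by_cases ht : t ∈ q.support
  · rw [Finset.sum_eq_single t]
    · exact coeff_D_monomial_top D d e hC hde hXe t _
    · intro n hn hne
      have hnt : n ≤ t := by
        by_contra hgt
        exact (Polynomial.mem_support_iff.mp hn) (hq n (by omega))
      exact coeff_D_monomial_zero D d e hC hde hXe n _ _ (by omega)
    · intro hab
      exact absurd ht hab
  · have hq0 : q.coeff t = 0 := Polynomial.notMem_support_iff.mp ht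
    rw [hq0]
    have hrhs : t • ((0:R) * (D X).coeff (e + 1)) + (D (Polynomial.C (0:R))).coeff e = 0 := by
      simp
    rw [hrhs]
    refine Finset.sum_eq_zero fun n hn => ?_
    have hnt : n ≤ t := by
      by_contra hgt
      exact (Polynomial.mem_support_iff.mp hn) (hq n (by omega))
    have hnet : n ≠ t := fun hh => ht (hh ▸ hn)
    exact coeff_D_monomial_zero D d e hC hde hXe n _ _ (by omega)

end Coeffs

section Main

variable {k A : Type*} [Field k] [CharZero k] [CommRing A] [IsDomain A] [Algebra k A]

/-- The "coefficient at `d` of `D` applied to constants" derivation on `A`. -/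
def coeffDer (D : Derivation k (Polynomial A) (Polynomial A)) (d : ℕ) :
    Derivation k A A where
  toLinearMap := ((Polynomial.lcoeff A d).restrictScalars k) ∘ₗ
    (D.toLinearMap ∘ₗ ((Algebra.linearMap A (Polynomial A)).restrictScalars k))
  map_one_eq_zero' := by
    simp
  leibniz' a b := by
    simp only [LinearMap.coe_comp, LinearMap.coe_restrictScalars, Function.comp_apply,
      Algebra.linearMap_apply, Derivation.coeFn_coe, lcoeff_apply, smul_eq_mul]
    have : algebraMap A (Polynomial A) = Polynomial.C := rfl
    rw [this, map_mul, Derivation.leibniz, smul_eq_mul, smul_eq_mul, coeff_add,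
      coeff_C_mul, coeff_C_mul]

lemma coeffDer_apply (D : Derivation k (Polynomial A) (Polynomial A)) (d : ℕ) (a : A) :
    coeffDer D d a = (D (Polynomial.C a)).coeff d := rfl

/-- `Polynomial.derivative` as a `k`-derivation. -/
def derivDer : Derivation k (Polynomial A) (Polynomial A) :=
  (Polynomial.derivative' (R := A)).restrictScalars k

lemma derivDer_apply (p : Polynomial A) : (derivDer (k := k)) p = derivative p := rfl

/-- The top graded part of an LND. -/
def topDer (D : Derivation k (Polynomial A) (Polynomial A)) (d : ℕ) :
    Derivation k (Polynomial A) (Polynomial A) :=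
  ((X : Polynomial A) ^ d) • cwDer (coeffDer D d) +
    (Polynomial.C ((D X).coeff (d + 1)) * X ^ (d + 1)) • derivDer

lemma topDer_monomial (D : Derivation k (Polynomial A) (Polynomial A)) (d : ℕ) (n : ℕ) (a : A) :
    topDer D d (monomial n a) =
      monomial (n + d) (coeffDer D d a + (n : A) * ((D X).coeff (d + 1) * a)) := by
  rw [topDer]
  rw [Derivation.add_apply, Derivation.smul_apply, Derivation.smul_apply]
  rw [derivDer_apply, derivative_monomial]
  have hcw : cwDer (coeffDer D d) (monomial n a) = monomial n (coeffDer D d a) := by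
    ext i
    rw [cwDer_coeff, coeff_monomial, coeff_monomial, apply_ite (coeffDer D d), map_zero]
  rw [hcw]
  rw [smul_eq_mul, smul_eq_mul, X_pow_eq_monomial, monomial_mul_monomial, one_mul]
  rw [C_mul_X_pow_eq_monomial, monomial_mul_monomial]
  cases n with
  | zero =>
    simp
  | succ m =>
    have h1 : d + 1 + (m + 1 - 1) = m + 1 + d := by omega
    rw [h1]
    have h2 : d + (m+1) = m + 1 + d := by omega
    rw [h2, ← map_add (monomial (m + 1 + d))]
    congr 1
    push_cast
    ring

/-- The top coefficient sequence of iterates of `D` on `monomial n a`. -/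
def tops (D : Derivation k (Polynomial A) (Polynomial A)) (d n : ℕ) (a : A) : ℕ → A
  | 0 => a
  | N + 1 => coeffDer D d (tops D d n a N) +
      ((n + N * d : ℕ) : A) * ((D X).coeff (d + 1) * tops D d n a N)

variable (D : Derivation k (Polynomial A) (Polynomial A)) (d : ℕ)
  (hC : ∀ (a : A) (j : ℕ), d < j → (D (Polynomial.C a)).coeff j = 0)
  (hX : ∀ j, d + 1 < j → (D X).coeff j = 0)

include hC hX

lemma key_iter (N n : ℕ) (a : A) :
    (∀ j, n + N * d < j → ((D.toLinearMap ^ N) (monomial n a)).coeff j = 0) ∧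
    ((D.toLinearMap ^ N) (monomial n a)).coeff (n + N * d) = tops D d n a N ∧
    ((topDer D d).toLinearMap ^ N) (monomial n a) =
      monomial (n + N * d) (tops D d n a N) := by
  induction N with
  | zero =>
    refine ⟨fun j hj => ?_, ?_, ?_⟩
    · simp only [pow_zero, Module.End.one_apply, coeff_monomial]
      rw [if_neg (by omega)]
    · simp [tops, coeff_monomial]
    · simp [tops]
  | succ N ih =>
    obtain ⟨ihz, iht, ihb⟩ := ih
    have harith : n + (N + 1) * d = (n + N * d) + d := by ring
    refine ⟨fun j hj => ?_, ?_, ?_⟩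
    · rw [iter_succ_apply]
      exact coeff_D_apply_zero D d d hC le_rfl hX _ (n + N * d) ihz j (by omega)
    · rw [iter_succ_apply, harith]
      rw [coeff_D_apply_top D d d hC le_rfl hX _ (n + N * d) ihz]
      rw [iht, ← coeffDer_apply, nsmul_eq_mul]
      simp only [tops]
      ring
    · rw [iter_succ_apply, ihb, topDer_monomial, harith]
      simp only [tops, ← coeffDer_apply]

lemma topDer_lnd (hD : IsLND D) : IsLND (topDer D d) := by
  intro p
  induction p using Polynomial.induction_on' with
  | add p q hp hq =>
    obtain ⟨Np, hNp⟩ := hp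
    obtain ⟨Nq, hNq⟩ := hq
    exact ⟨max Np Nq, by
      rw [map_add, iter_zero_of_le _ (le_max_left Np Nq) hNp,
        iter_zero_of_le _ (le_max_right Np Nq) hNq, add_zero]⟩
  | monomial n a =>
    obtain ⟨N, hN⟩ := hD (monomial n a)
    refine ⟨N, ?_⟩
    have h := (key_iter D d hC hX N n a).2.1
    rw [hN, coeff_zero] at h
    rw [(key_iter D d hC hX N n a).2.2, ← h, monomial_zero_right]

lemma u_eq_zero (hD : IsLND D) : (D X).coeff (d + 1) = 0 := by
  haveI : CharZero A := charZero_of_injective_algebraMap (algebraMap k A).injective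
  by_contra hu
  refine no_top (topDer D d) (topDer_lnd D d hC hX hD) hu d ?_
  have hX1 : (X : Polynomial A) = monomial 1 1 := by
    rw [← C_mul_X_pow_eq_monomial, map_one, one_mul, pow_one]
  conv_lhs => rw [hX1]
  rw [topDer_monomial]
  have h1 : coeffDer D d (1:A) = 0 := Derivation.map_one_eq_zero _
  rw [h1, C_mul_X_pow_eq_monomial]
  have h2 : 1 + d = d + 1 := by omega
  rw [h2]
  congr 1
  simp

lemma coeffDer_lnd (hD : IsLND D) : IsLND (coeffDer D d) := by
  have hu := u_eq_zero D d hC hX hD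
  intro a
  obtain ⟨N, hN⟩ := hD (Polynomial.C a)
  refine ⟨N, ?_⟩
  have h := (key_iter D d hC hX N 0 a).2.1
  rw [← monomial_zero_left] at hN
  rw [hN, coeff_zero] at h
  have htops : ∀ M, tops D d 0 a M = ((coeffDer D d).toLinearMap ^ M) a := by
    intro M
    induction M with
    | zero => simp [tops]
    | succ M ihM =>
      rw [tops, hu, zero_mul, mul_zero, add_zero, ihM, iter_succ_apply]
  rw [htops N] at h
  exact h.symm

omit hC hX

lemma forward [Algebra.FiniteType k A]
    (hrig : ∀ δ : Derivation k A A, IsLND δ → δ = 0)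
    (hD : IsLND D) (c : A) : D (Polynomial.C c) = 0 := by
  haveI : CharZero A := charZero_of_injective_algebraMap (algebraMap k A).injective
  classical
  by_contra hc
  obtain ⟨s, hs⟩ := (inferInstance : Algebra.FiniteType k A).out
  set d₀ : ℕ := s.sup (fun a => (D (Polynomial.C a)).natDegree) with hd₀
  have hbound : ∀ a : A, (D (Polynomial.C a)).natDegree ≤ d₀ := by
    intro a
    have hmem : a ∈ Algebra.adjoin k (↑s : Set A) := by
      rw [hs]; trivial
    induction hmem using Algebra.adjoin_induction with
    | mem x hx => exact Finset.le_sup (f := fun a => (D (Polynomial.C a)).natDegree) hx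
    | algebraMap r =>
      rw [← Polynomial.algebraMap_apply, Derivation.map_algebraMap]
      simp
    | add x y hx hy ihx ihy =>
      rw [map_add, map_add]
      exact le_trans (natDegree_add_le _ _) (by omega)
    | mul x y hx hy ihx ihy =>
      rw [map_mul, Derivation.leibniz, smul_eq_mul, smul_eq_mul]
      refine le_trans (natDegree_add_le _ _) ?_
      have h1 := le_trans (natDegree_C_mul_le x (D (Polynomial.C y))) ihy
      have h2 := le_trans (natDegree_C_mul_le y (D (Polynomial.C x))) ihx
      omega
  set P : ℕ → Prop := fun j => ∃ a : A, (D (Polynomial.C a)).coeff j ≠ 0 with hP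
  have hPex : P ((D (Polynomial.C c)).natDegree) := ⟨c, Polynomial.leadingCoeff_ne_zero.mpr hc⟩
  set d : ℕ := Nat.findGreatest P d₀ with hd
  have hPd : P d := Nat.findGreatest_spec (hbound c) hPex
  have hCvan : ∀ (a : A) (j : ℕ), d < j → (D (Polynomial.C a)).coeff j = 0 := by
    intro a j hj
    rcases le_or_gt j d₀ with hle | hlt
    · by_contra hne
      exact Nat.findGreatest_is_greatest hj hle ⟨a, hne⟩
    · exact coeff_eq_zero_of_natDegree_lt (lt_of_le_of_lt (hbound a) hlt)
  have hXdeg : (D X).natDegree ≤ d + 1 := by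
    by_contra hbig
    push_neg at hbig
    set m := (D X).natDegree with hm
    have hDX0 : D X ≠ 0 := by
      intro h0
      rw [hm, h0, natDegree_zero] at hbig
      omega
    have hXe : ∀ j, (m - 1) + 1 < j → (D X).coeff j = 0 := by
      intro j hj
      exact coeff_eq_zero_of_natDegree_lt (by omega)
    have hde : d ≤ m - 1 := by omega
    have grow : ∀ n : ℕ, (((D.toLinearMap ^ n) X).coeff (n * (m-1) + 1) ≠ 0) ∧
        ∀ j, n * (m-1) + 1 < j → ((D.toLinearMap ^ n) X).coeff j = 0 := by
      intro n
      induction n with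
      | zero =>
        constructor
        · simp
        · intro j hj
          simp only [pow_zero, Module.End.one_apply, coeff_X]
          rw [if_neg (by omega)]
      | succ n ih =>
        have harith : (n+1) * (m-1) + 1 = (n * (m-1) + 1) + (m-1) := by ring
        constructor
        · rw [iter_succ_apply, harith,
            coeff_D_apply_top D d (m-1) hCvan hde hXe _ (n * (m-1) + 1) ih.2]
          have hz : (D (Polynomial.C (((D.toLinearMap ^ n) X).coeff (n * (m-1) + 1)))).coeff
              (m - 1) = 0 := hCvan _ _ (by omega)
          rw [hz, add_zero, nsmul_eq_mul]
          have hmm : m - 1 + 1 = m := by omega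
          rw [hmm]
          refine mul_ne_zero (Nat.cast_ne_zero.mpr (by omega)) (mul_ne_zero ih.1 ?_)
          exact Polynomial.leadingCoeff_ne_zero.mpr hDX0
        · intro j hj
          rw [iter_succ_apply]
          exact coeff_D_apply_zero D d (m-1) hCvan hde hXe _ (n * (m-1) + 1) ih.2 j (by omega)
    obtain ⟨N, hN⟩ := hD X
    have := (grow N).1
    rw [hN, coeff_zero] at this
    exact this rfl
  have hXd : ∀ j, d + 1 < j → (D X).coeff j = 0 := fun j hj =>
    coeff_eq_zero_of_natDegree_lt (lt_of_le_of_lt hXdeg hj)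
  have hδ := coeffDer_lnd D d hCvan hXd hD
  have hzero := hrig (coeffDer D d) hδ
  obtain ⟨a₀, ha₀⟩ := hPd
  apply ha₀
  rw [← coeffDer_apply, hzero]
  rfl

end Main


section Final

variable {k A : Type*} [Field k] [CharZero k] [CommRing A] [IsDomain A] [Algebra k A]

lemma mem_lndKer_iff {D : Derivation k (Polynomial A) (Polynomial A)} {x : Polynomial A} :
    x ∈ lndKer D ↔ D x = 0 := Iff.rfl

lemma mem_MLstar_iff {x : Polynomial A} :
    x ∈ MLstar k (B := Polynomial A) ↔
      ∀ D : Derivation k (Polynomial A) (Polynomial A), IsLND D → HasSlice D → D x = 0 := by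
  rw [MLstar]
  simp only [Algebra.mem_iInf, Set.mem_setOf_eq]
  constructor
  · intro h D h1 h2
    exact mem_lndKer_iff.mp (h D ⟨h1, h2⟩)
  · intro h D hD
    exact mem_lndKer_iff.mpr (h D hD.1 hD.2)

lemma derivDer_iter (n : ℕ) (p : Polynomial A) :
    ((derivDer (k := k) (A := A)).toLinearMap ^ n) p = derivative^[n] p := by
  induction n with
  | zero => rfl
  | succ n ih =>
    rw [iter_succ_apply, ih, Function.iterate_succ_apply']
    rfl

lemma derivDer_lnd : IsLND (derivDer (k := k) (A := A)) := fun p =>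
  ⟨p.natDegree + 1, by
    rw [derivDer_iter]
    exact iterate_derivative_eq_zero (Nat.lt_succ_self _)⟩

lemma derivDer_slice : HasSlice (derivDer (k := k) (A := A)) :=
  ⟨X, by rw [derivDer_apply, derivative_X]⟩

lemma cw_iter_coeff (δ : Derivation k A A) (j : ℕ) (p : Polynomial A) (i : ℕ) :
    (((cwDer δ).toLinearMap ^ j) p).coeff i = (δ.toLinearMap ^ j) (p.coeff i) := by
  induction j with
  | zero => rfl
  | succ j ih =>
    rw [iter_succ_apply, cwDer_coeff, ih, iter_succ_apply]

lemma cw_iter_vanish (δ : Derivation k A A) (hδ : IsLND δ) (p : Polynomial A) :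
    ∃ M, (((cwDer δ).toLinearMap) ^ M) p = 0 := by
  induction p using Polynomial.induction_on' with
  | add p q hp hq =>
    obtain ⟨Mp, hMp⟩ := hp
    obtain ⟨Mq, hMq⟩ := hq
    exact ⟨max Mp Mq, by
      rw [map_add, iter_zero_of_le _ (le_max_left Mp Mq) hMp,
        iter_zero_of_le _ (le_max_right Mp Mq) hMq, add_zero]⟩
  | monomial n a =>
    obtain ⟨M, hM⟩ := hδ a
    refine ⟨M, ?_⟩
    ext i
    rw [cw_iter_coeff, coeff_zero, coeff_monomial]
    split_ifs with h
    · exact hM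
    · exact map_zero _

lemma backward (hml : (MLstar k (B := Polynomial A) : Set (Polynomial A)) =
      Set.range (fun c : A => (Polynomial.C c : Polynomial A)))
    (D₀ : Derivation k A A) (hD₀ : IsLND D₀) : D₀ = 0 := by
  refine Derivation.ext fun a => ?_
  rw [Derivation.zero_apply]
  set E : Derivation k (Polynomial A) (Polynomial A) := derivDer + cwDer D₀ with hE
  have hEX : E X = 1 := by
    rw [hE, Derivation.add_apply, derivDer_apply, derivative_X, cwDer_X, add_zero]
  have hcomm : Commute (derivDer (k := k) (A := A)).toLinearMap (cwDer D₀).toLinearMap := by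
    refine LinearMap.ext fun p => ?_
    ext i
    rw [Module.End.mul_apply, Module.End.mul_apply]
    show (derivDer ((cwDer D₀) p)).coeff i = ((cwDer D₀) (derivDer p)).coeff i
    rw [derivDer_apply, coeff_derivative, cwDer_coeff, cwDer_coeff, derivDer_apply,
      coeff_derivative, Derivation.leibniz]
    have h0 : D₀ ((i : A) + 1) = 0 := by
      rw [← Nat.cast_succ, Derivation.map_natCast]
    rw [h0, smul_zero, zero_add, smul_eq_mul]
    ring
  have hEcoe : E.toLinearMap =
      (derivDer (k := k) (A := A)).toLinearMap + (cwDer D₀).toLinearMap := rfl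
  have hElnd : IsLND E := by
    intro p
    obtain ⟨M, hM⟩ := cw_iter_vanish D₀ hD₀ p
    refine ⟨M + p.natDegree + 1, ?_⟩
    rw [hEcoe, Commute.add_pow hcomm, LinearMap.sum_apply]
    refine Finset.sum_eq_zero fun i hi => ?_
    rw [Module.End.mul_apply, Module.End.mul_apply, Module.End.natCast_apply,
      map_nsmul, map_nsmul]
    rcases le_or_gt M (M + p.natDegree + 1 - i) with hj | hj
    · have hBj : ((cwDer D₀).toLinearMap ^ (M + p.natDegree + 1 - i)) p = 0 := by
        rw [← Nat.sub_add_cancel hj, pow_add, Module.End.mul_apply, hM, map_zero]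
      rw [hBj, map_zero, smul_zero]
    · have hdeg : (((cwDer D₀).toLinearMap ^ (M + p.natDegree + 1 - i)) p).natDegree ≤
          p.natDegree := by
        refine natDegree_le_iff_coeff_eq_zero.mpr fun m hm => ?_
        rw [cw_iter_coeff, coeff_eq_zero_of_natDegree_lt hm, map_zero]
      have hi' : i ∈ Finset.range (M + p.natDegree + 1 + 1) := hi
      rw [Finset.mem_range] at hi'
      have hz : ((derivDer (k := k) (A := A)).toLinearMap ^ i)
          (((cwDer D₀).toLinearMap ^ (M + p.natDegree + 1 - i)) p) = 0 := by
        rw [derivDer_iter]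
        exact iterate_derivative_eq_zero (by omega)
      rw [hz, smul_zero]
  have hmem : Polynomial.C a ∈ MLstar k (B := Polynomial A) := by
    have h1 : Polynomial.C a ∈ (MLstar k (B := Polynomial A) : Set (Polynomial A)) := by
      rw [hml]
      exact ⟨a, rfl⟩
    exact h1
  have hz := (mem_MLstar_iff.mp hmem) E hElnd ⟨X, hEX⟩
  have hECa : E (Polynomial.C a) = Polynomial.C (D₀ a) := by
    rw [hE, Derivation.add_apply, derivDer_apply, derivative_C, cwDer_C, zero_add]
  rw [hECa] at hz
  exact Polynomial.C_eq_zero.mp hz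

end Final

end CML10

end CML10Aux

/-- `C` is rigid if and only if `ML*(C[T]) = C`. -/
theorem stmt_10 {k C : Type*} [Field k] [CharZero k] [CommRing C] [IsDomain C] [Algebra k C]
    [Algebra.FiniteType k C] :
    IsRigid k C ↔
      (MLstar k (B := Polynomial C) : Set (Polynomial C)) =
        Set.range (fun c : C => (Polynomial.C c : Polynomial C)) := by
  haveI : CharZero C := charZero_of_injective_algebraMap (algebraMap k C).injective
  constructor
  · intro hrig
    refine subset_antisymm ?_ ?_
    · intro x hx
      have hx' : x ∈ MLstar k (B := Polynomial C) := hx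
      have h := (CML10.mem_MLstar_iff.mp hx') CML10.derivDer CML10.derivDer_lnd
        CML10.derivDer_slice
      rw [CML10.derivDer_apply] at h
      haveI : NoZeroSMulDivisors ℕ C := inferInstance
      exact ⟨x.coeff 0, (Polynomial.eq_C_of_derivative_eq_zero h).symm⟩
    · rintro x ⟨a, rfl⟩
      simp only [SetLike.mem_coe]
      refine CML10.mem_MLstar_iff.mpr fun D hD hs => ?_
      exact CML10.forward D hrig hD a
  · intro hml D hD
    exact CML10.backward hml D hD
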